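/- Every complete metrizable space X is homeomorphic to a closed subspace of C_p(K) for some compact Hausdorff space K, where C_p(K) denotes the space of continuous real-valued functions on K with the topology of pointwise convergence. -/

import Mathlib

open Metric Set Topology Filter

namespace Stmt4Proof

variable {X : Type*} [MetricSpace X]

def Kset (X : Type*) [MetricSpace X] : Set (X → ℝ) :=
  {f | (∀ x, |f x| ≤ 1) ∧ ∀ x y, |f x - f y| ≤ min (dist x y) 1}

lemma isCompact_Kset : IsCompact (Kset X) := by
  have h1 : Kset X ⊆ Set.pi Set.univ (fun _ : X => Icc (-1:ℝ) 1) := by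
    intro f hf z _
    simpa [mem_Icc, abs_le] using hf.1 z
  refine IsCompact.of_isClosed_subset (isCompact_univ_pi fun _ => isCompact_Icc) ?_ h1
  have : Kset X = (⋂ x : X, {f : X → ℝ | |f x| ≤ 1}) ∩
      ⋂ (x : X) (y : X), {f : X → ℝ | |f x - f y| ≤ min (dist x y) 1} := by
    ext f; simp [Kset, Set.mem_iInter]
  rw [this]
  refine IsClosed.inter (isClosed_iInter fun x => ?_) (isClosed_iInter fun x => isClosed_iInter fun y => ?_)
  · exact isClosed_le (continuous_abs.comp (continuous_apply x)) continuous_const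
  · exact isClosed_le (continuous_abs.comp ((continuous_apply x).sub (continuous_apply y))) continuous_const

noncomputable def Hfun (A : Set X) : X → ℝ := fun z => min (infDist z A) 1

lemma Hfun_nonneg (A : Set X) (z : X) : 0 ≤ Hfun A z :=
  le_min infDist_nonneg zero_le_one

lemma Hfun_mem (A : Set X) : Hfun A ∈ Kset X := by
  constructor
  · intro x
    rw [abs_le]
    exact ⟨by linarith [Hfun_nonneg A x], min_le_right _ _⟩
  · intro x y
    have h1 : |infDist x A - infDist y A| ≤ dist x y := by
      rw [abs_sub_le_iff]
      constructor
      · linarith [infDist_le_infDist_add_dist (x := x) (y := y) (s := A)]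
      · linarith [infDist_le_infDist_add_dist (x := y) (y := x) (s := A), dist_comm x y]
    refine le_min ?_ ?_
    · calc |Hfun A x - Hfun A y| ≤ max |infDist x A - infDist y A| |(1:ℝ) - 1| :=
            abs_min_sub_min_le_max _ _ _ _
        _ ≤ dist x y := by
            rw [sub_self, abs_zero]
            exact max_le h1 dist_nonneg
    · have hx := Hfun_nonneg A x
      have hy := Hfun_nonneg A y
      have hx1 : Hfun A x ≤ 1 := min_le_right _ _
      have hy1 : Hfun A y ≤ 1 := min_le_right _ _
      rw [abs_sub_le_iff]; constructor <;> linarith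

lemma Hfun_singleton (x z : X) : Hfun {x} z = min (dist z x) 1 := by
  simp [Hfun, infDist_singleton]

lemma Kset_zero : (0 : X → ℝ) ∈ Kset X := by
  constructor
  · intro x; simp
  · intro x y; simpa using le_min dist_nonneg zero_le_one

lemma Kset_inf' {ι : Type*} (t : Finset ι) (ht : t.Nonempty) (F : ι → X → ℝ)
    (hF : ∀ i ∈ t, F i ∈ Kset X) :
    (fun w => t.inf' ht fun i => F i w) ∈ Kset X := by
  constructor
  · intro x
    dsimp only
    obtain ⟨i₀, hi₀⟩ := id ht
    rw [abs_le]
    constructor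
    · refine Finset.le_inf' ht _ fun i hi => ?_
      linarith [(abs_le.1 ((hF i hi).1 x)).1]
    · exact le_trans (Finset.inf'_le _ hi₀) (abs_le.1 ((hF i₀ hi₀).1 x)).2
  · intro x y
    dsimp only
    rw [abs_sub_le_iff]
    constructor
    · obtain ⟨j, hj, hjeq⟩ := Finset.exists_mem_eq_inf' ht (fun i => F i y)
      rw [hjeq]
      refine le_trans (sub_le_sub_right (Finset.inf'_le _ hj) _) ?_
      linarith [(abs_sub_le_iff.1 ((hF j hj).2 x y)).1]
    · obtain ⟨j, hj, hjeq⟩ := Finset.exists_mem_eq_inf' ht (fun i => F i x)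
      rw [hjeq]
      refine le_trans (sub_le_sub_right (Finset.inf'_le _ hj) _) ?_
      linarith [(abs_sub_le_iff.1 ((hF j hj).2 x y)).2]

lemma min_lt_of_lt {a c : ℝ} (h : min a 1 < c) (hc : c ≤ 1) : a < c := by
  by_contra h'
  exact absurd (le_min (not_lt.1 h') hc) (not_le.2 h)

lemma dist_center_lt {z x : X} {r b : ℝ} (hr : 0 ≤ r)
    (h : infDist x (closedBall z r) < b) : dist x z < b + r := by
  obtain ⟨y, hy, hxy⟩ := (infDist_lt_iff (nonempty_closedBall.2 hr)).1 h
  calc dist x z ≤ dist x y + dist y z := dist_triangle _ _ _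
    _ < b + r := add_lt_add_of_lt_of_le hxy (mem_closedBall.1 hy)


noncomputable def phi (X : Type*) [MetricSpace X] :
    X → {g : ↥(Kset X) → ℝ // Continuous g} :=
  fun x => ⟨fun f => f.1 x, (continuous_apply x).comp continuous_subtype_val⟩

lemma continuous_phi : Continuous (phi X) := by
  refine Continuous.subtype_mk ?_ _
  refine continuous_pi fun f => ?_
  have : LipschitzWith 1 (fun x => f.1 x) := by
    refine LipschitzWith.of_dist_le_mul fun a b => ?_
    rw [Real.dist_eq, NNReal.coe_one, one_mul]
    exact le_trans (f.2.2 a b) (min_le_left _ _)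
  exact this.continuous

lemma isEmbedding_phi : Topology.IsEmbedding (phi X) := by
  refine Topology.IsEmbedding.mk' _ ?_ ?_
  · intro x y hxy
    have h := congrFun (congrArg Subtype.val hxy) ⟨Hfun {x}, Hfun_mem _⟩
    simp only [phi, Hfun_singleton] at h
    rw [dist_self] at h
    have h0 : min (dist y x) 1 = 0 := by
      rw [← h]; simp
    have : dist y x = 0 := by
      by_contra hd
      have : (0:ℝ) < min (dist y x) 1 :=
        lt_min (lt_of_le_of_ne dist_nonneg (Ne.symm hd)) one_pos
      linarith
    exact (eq_of_dist_eq_zero this).symm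
  · intro x
    refine le_antisymm ?_ (continuous_phi.tendsto x).le_comap
    rw [Metric.nhds_basis_ball.ge_iff]
    intro ε hε
    rw [Filter.mem_comap]
    refine ⟨(fun h : {g : ↥(Kset X) → ℝ // Continuous g} => h.1 ⟨Hfun {x}, Hfun_mem _⟩) ⁻¹'
      (Metric.ball (0:ℝ) (min ε 1)), ?_, ?_⟩
    · refine IsOpen.mem_nhds (IsOpen.preimage ((continuous_apply
        (⟨Hfun {x}, Hfun_mem _⟩ : ↥(Kset X))).comp continuous_subtype_val) Metric.isOpen_ball) ?_
      simp [phi, Hfun_singleton, Real.dist_eq, lt_min hε one_pos]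
    · intro y hy
      simp only [phi, mem_preimage, Metric.mem_ball, Real.dist_eq, Hfun_singleton,
        sub_zero] at hy
      rw [abs_of_nonneg (le_min dist_nonneg zero_le_one)] at hy
      have : dist y x < ε := by
        by_contra hd
        have : min ε 1 ≤ min (dist y x) 1 := min_le_min (not_lt.1 hd) le_rfl
        linarith
      exact Metric.mem_ball.2 this


lemma isClosed_range_phi (X : Type*) [MetricSpace X] [CompleteSpace X] :
    IsClosed (Set.range (phi X)) := by
  classical
  refine isClosed_of_closure_subset ?_
  intro g hg
  have approx : ∀ (s : Finset ↥(Kset X)) (δ : ℝ), 0 < δ →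
      ∃ x : X, ∀ f ∈ s, |f.1 x - g.1 f| < δ := by
    intro s δ hδ
    have hU : {h : {g' : ↥(Kset X) → ℝ // Continuous g'} | ∀ f ∈ s, |h.1 f - g.1 f| < δ}
        ∈ 𝓝 g := by
      have heq : {h : {g' : ↥(Kset X) → ℝ // Continuous g'} | ∀ f ∈ s, |h.1 f - g.1 f| < δ}
          = ⋂ f ∈ s, {h : {g' : ↥(Kset X) → ℝ // Continuous g'} | |h.1 f - g.1 f| < δ} := by
        ext h; simp
      rw [heq]
      refine (Filter.biInter_finset_mem s).2 fun f hf => ?_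
      have hop : IsOpen {h : {g' : ↥(Kset X) → ℝ // Continuous g'} | |h.1 f - g.1 f| < δ} := by
        have heq2 : {h : {g' : ↥(Kset X) → ℝ // Continuous g'} | |h.1 f - g.1 f| < δ}
            = (fun h : {g' : ↥(Kset X) → ℝ // Continuous g'} => h.1 f) ⁻¹'
              (Metric.ball (g.1 f) δ) := by
          ext h; simp [Real.dist_eq, Metric.mem_ball]
        rw [heq2]
        exact IsOpen.preimage ((continuous_apply f).comp continuous_subtype_val)
          Metric.isOpen_ball
      exact hop.mem_nhds (by simp [hδ])
    rcases mem_closure_iff_nhds.1 hg _ hU with ⟨h, hh1, xh, rfl⟩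
    exact ⟨xh, fun f hf => hh1 f hf⟩
  obtain ⟨x₀, -⟩ := approx ∅ 1 one_pos
  have hgζ : g.1 ⟨0, Kset_zero⟩ = 0 := by
    by_contra h0
    obtain ⟨x, hx⟩ := approx {(⟨0, Kset_zero⟩ : ↥(Kset X))} _ (abs_pos.2 h0)
    have := hx _ (Finset.mem_singleton_self _)
    simp only [Pi.zero_apply, zero_sub, abs_neg] at this
    exact lt_irrefl _ this
  have key : ∀ r ε : ℝ, 0 < r → 0 < ε →
      ∃ z : X, g.1 ⟨Hfun (closedBall z r), Hfun_mem _⟩ < ε := by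
    intro r ε hr hε
    set F : Finset X → ↥(Kset X) := fun t =>
      ⟨fun w => (insert x₀ t).inf' (Finset.insert_nonempty _ _)
          (fun zz => Hfun (closedBall zz r) w),
       Kset_inf' _ _ _ (fun i _ => Hfun_mem _)⟩ with hF
    have hFt : Tendsto (fun t => (F t).1) atTop (𝓝 (0 : X → ℝ)) := by
      rw [tendsto_pi_nhds]
      intro w
      have hev : ∀ᶠ t : Finset X in atTop, (F t).1 w = 0 := by
        filter_upwards [Filter.eventually_ge_atTop ({w} : Finset X)] with t hwt
        refine le_antisymm ?_ (Finset.le_inf' (Finset.insert_nonempty _ _) _ fun i _ => Hfun_nonneg _ _)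
        have hwmem : w ∈ insert x₀ t :=
          Finset.mem_insert_of_mem (hwt (Finset.mem_singleton_self w))
        refine le_trans (Finset.inf'_le _ hwmem) ?_
        have h00 : infDist w (closedBall w r) = 0 :=
          infDist_zero_of_mem (mem_closedBall_self hr.le)
        simp [Hfun, h00]
      exact tendsto_const_nhds.congr' (hev.mono fun t ht => ht.symm)
    have hFζ : Tendsto F atTop (𝓝 (⟨0, Kset_zero⟩ : ↥(Kset X))) := by
      rw [tendsto_subtype_rng]; exact hFt
    have hgF : Tendsto (fun t => g.1 (F t)) atTop (𝓝 0) := by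
      have h := (g.2.tendsto _).comp hFζ
      rwa [hgζ] at h
    have hev2 : ∀ᶠ t : Finset X in atTop, |g.1 (F t)| < ε/2 := by
      have h := Metric.tendsto_nhds.1 hgF (ε/2) (by linarith)
      simpa [Real.dist_eq] using h
    obtain ⟨t₀, ht₀⟩ := hev2.exists
    obtain ⟨x, hx⟩ := approx (insert (F t₀) ((insert x₀ t₀).image
        (fun zz => (⟨Hfun (closedBall zz r), Hfun_mem _⟩ : ↥(Kset X))))) (ε/4) (by linarith)
    obtain ⟨z₁, hz₁mem, hz₁⟩ := Finset.exists_mem_eq_inf' (Finset.insert_nonempty x₀ t₀)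
      (fun zz => Hfun (closedBall zz r) x)
    have h1 := hx (F t₀) (Finset.mem_insert_self _ _)
    have h2 := hx ⟨Hfun (closedBall z₁ r), Hfun_mem _⟩
      (Finset.mem_insert_of_mem (Finset.mem_image_of_mem _ hz₁mem))
    have h3 : (F t₀).1 x = Hfun (closedBall z₁ r) x := hz₁
    refine ⟨z₁, ?_⟩
    have h1' := abs_lt.1 h1
    have h2' := abs_lt.1 h2
    have ht₀' := abs_lt.1 ht₀
    rw [h3] at h1'
    linarith [h1'.1, h1'.2, h2'.1, h2'.2, ht₀'.1, ht₀'.2]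
  set ρ : ℕ → ℝ := fun k => (1/2:ℝ)^k * (1/8) with hρ
  have hρpos : ∀ k, 0 < ρ k := fun k => mul_pos (pow_pos (by norm_num) k) (by norm_num)
  have hρanti : ∀ j k, j ≤ k → ρ k ≤ ρ j := by
    intro j k hjk
    exact mul_le_mul_of_nonneg_right
      (pow_le_pow_of_le_one (by norm_num) (by norm_num) hjk) (by norm_num)
  have hρle : ∀ k, ρ k ≤ 1/8 := fun k => by
    have h := hρanti 0 k (Nat.zero_le k); simpa [hρ] using h
  have hρ0 : Tendsto ρ atTop (𝓝 0) := by
    have h : Tendsto (fun k : ℕ => (1/2:ℝ)^k) atTop (𝓝 0) :=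
      tendsto_pow_atTop_nhds_zero_of_lt_one (by norm_num) (by norm_num)
    simpa [hρ] using h.mul_const (1/8:ℝ)
  choose z hz using fun k => key (ρ k) (ρ k) (hρpos k) (hρpos k)
  have hxk : ∀ k : ℕ, ∃ x : X, ∀ j ≤ k, |Hfun (closedBall (z j) (ρ j)) x -
      g.1 ⟨Hfun (closedBall (z j) (ρ j)), Hfun_mem _⟩| < ρ k := by
    intro k
    obtain ⟨x, hx⟩ := approx ((Finset.range (k+1)).image
      (fun j => (⟨Hfun (closedBall (z j) (ρ j)), Hfun_mem _⟩ : ↥(Kset X)))) (ρ k) (hρpos k)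
    exact ⟨x, fun j hj => hx _
      (Finset.mem_image_of_mem _ (Finset.mem_range.2 (Nat.lt_succ_of_le hj)))⟩
  choose xx hxx using hxk
  have hdistz : ∀ j k, j ≤ k → dist (xx k) (z j) < 3 * ρ j := by
    intro j k hjk
    have h1 := (abs_lt.1 (hxx k j hjk)).2
    have h2 : Hfun (closedBall (z j) (ρ j)) (xx k) < ρ j + ρ k := by
      linarith [hz j]
    have h2' : infDist (xx k) (closedBall (z j) (ρ j)) < ρ j + ρ k :=
      min_lt_of_lt h2 (by linarith [hρle j, hρle k])
    have h4 := dist_center_lt (hρpos j).le h2'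
    linarith [hρanti j k hjk]
  have hcauchy : CauchySeq xx := by
    refine cauchySeq_of_le_geometric (1/2) (3/4) (by norm_num) fun n => ?_
    have h1 := hdistz n n le_rfl
    have h2 := hdistz n (n+1) (Nat.le_succ n)
    have h3 := dist_triangle (xx n) (z n) (xx (n+1))
    have h4 : dist (z n) (xx (n+1)) = dist (xx (n+1)) (z n) := dist_comm _ _
    have h5 : 6 * ρ n = 3/4 * (1/2:ℝ)^n := by simp only [hρ]; ring
    linarith
  obtain ⟨xstar, hxstar⟩ := cauchySeq_tendsto_of_complete hcauchy
  have hzxstar : ∀ j, dist xstar (z j) ≤ 3 * ρ j := by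
    intro j
    have htd : Tendsto (fun k => dist (xx k) (z j)) atTop (𝓝 (dist xstar (z j))) :=
      hxstar.dist tendsto_const_nhds
    refine le_of_tendsto htd ?_
    filter_upwards [Filter.eventually_ge_atTop j] with k hk
    exact (hdistz j k hk).le
  refine ⟨xstar, ?_⟩
  refine Subtype.ext (funext fun f => ?_)
  have hbound : ∀ k : ℕ, |g.1 f - f.1 xstar| ≤ 7 * ρ k := by
    intro k
    obtain ⟨x, hx⟩ := approx {f, ⟨Hfun (closedBall (z k) (ρ k)), Hfun_mem _⟩} (ρ k) (hρpos k)
    have h1 := hx f (Finset.mem_insert_self _ _)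
    have h2 := hx ⟨Hfun (closedBall (z k) (ρ k)), Hfun_mem _⟩
      (Finset.mem_insert_of_mem (Finset.mem_singleton_self _))
    have h3 : Hfun (closedBall (z k) (ρ k)) x < 2 * ρ k := by
      linarith [(abs_lt.1 h2).2, hz k]
    have h4 : infDist x (closedBall (z k) (ρ k)) < 2 * ρ k :=
      min_lt_of_lt h3 (by linarith [hρle k])
    have h5 : dist x (z k) < 3 * ρ k := by
      have := dist_center_lt (hρpos k).le h4; linarith
    have h6 : dist x xstar ≤ 6 * ρ k := by
      have ht := dist_triangle x (z k) xstar
      have hc : dist (z k) xstar = dist xstar (z k) := dist_comm _ _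
      linarith [hzxstar k]
    have h7 : |f.1 x - f.1 xstar| ≤ 6 * ρ k :=
      le_trans (f.2.2 x xstar) (le_trans (min_le_left _ _) h6)
    have h8 := (abs_lt.1 h1)
    calc |g.1 f - f.1 xstar| ≤ |g.1 f - f.1 x| + |f.1 x - f.1 xstar| := abs_sub_le _ _ _
      _ ≤ ρ k + 6 * ρ k := by
          have h9 : |g.1 f - f.1 x| = |f.1 x - g.1 f| := abs_sub_comm _ _
          linarith [h8.1, h8.2]
      _ = 7 * ρ k := by ring
  have h0 : |g.1 f - f.1 xstar| ≤ 0 := by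
    have htends : Tendsto (fun k => 7 * ρ k) atTop (𝓝 0) := by
      have h := hρ0.const_mul (7:ℝ)
      rwa [mul_zero] at h
    exact ge_of_tendsto' htends hbound
  have heq : g.1 f - f.1 xstar = 0 := abs_eq_zero.1 (le_antisymm h0 (abs_nonneg _))
  show f.1 xstar = g.1 f
  linarith

end Stmt4Proof

/-- Every complete metrizable space is homeomorphic to a closed subspace of `C_p(K)`
for some compact Hausdorff space `K`, where `C_p(K)` is the space of continuous
real-valued functions on `K` with the topology of pointwise convergence (i.e. as a
subspace of `K → ℝ` with the product topology). -/
theorem stmt_4 {X : Type u} [MetricSpace X] [CompleteSpace X] :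
    ∃ (K : Type u) (_ : TopologicalSpace K), CompactSpace K ∧ T2Space K ∧
      ∃ φ : X → {g : K → ℝ // Continuous g},
        Topology.IsEmbedding φ ∧ IsClosed (Set.range φ) := by
  exact ⟨↥(Stmt4Proof.Kset X), inferInstance,
    isCompact_iff_compactSpace.1 Stmt4Proof.isCompact_Kset, inferInstance,
    Stmt4Proof.phi X, Stmt4Proof.isEmbedding_phi, Stmt4Proof.isClosed_range_phi X⟩
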